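/- Let G be an additive subgroup of ℝ containing 1. Then the closure of G in ℝ with respect to the Euclidean topology equals the set {r ∈ ℝ : den(r) divides lcm{den(g) : g ∈ G}}, where the lcm is computed in ℕ ordered by divisibility with 0 as top element. -/

import Mathlib

open Classical in
/-- The denominator of a real number: the reduced denominator if rational, `0` if irrational. -/
noncomputable def den (r : ℝ) : ℕ :=
  if h : ∃ q : ℚ, (q : ℝ) = r then h.choose.den else 0

/-- The least common multiple of a set of naturals, computed in `ℕ` ordered by
divisibility with `0` as top element. -/
noncomputable def setLcm (S : Set ℕ) : ℕ :=
  sInf {n | (∀ s ∈ S, s ∣ n) ∧ ∀ m : ℕ, (∀ s ∈ S, s ∣ m) → n ∣ m}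

lemma den_ratCast (q : ℚ) : den (q : ℝ) = q.den := by
  have h : ∃ p : ℚ, (p : ℝ) = (q : ℝ) := ⟨q, rfl⟩
  rw [den, dif_pos h]
  congr 1
  exact_mod_cast h.choose_spec

lemma rat_den_dvd (m : ℤ) (n : ℕ) : ((m : ℚ) / n).den ∣ n := by
  have := Rat.den_dvd m (n : ℤ)
  rw [Rat.divInt_eq_div] at this
  exact_mod_cast this

lemma rat_den_dvd_iff {q : ℚ} {n : ℕ} (hn : n ≠ 0) :
    q.den ∣ n ↔ ∃ m : ℤ, (m : ℚ) / n = q := by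
  constructor
  · rintro ⟨k, hk⟩
    have hk0 : k ≠ 0 := by rintro rfl; simp at hk; exact hn hk
    refine ⟨q.num * k, ?_⟩
    have : ((n : ℕ) : ℚ) = (q.den : ℚ) * k := by exact_mod_cast hk
    rw [this]
    push_cast
    rw [mul_div_mul_right _ _ (by exact_mod_cast hk0), Rat.num_div_den]
  · rintro ⟨m, rfl⟩
    exact rat_den_dvd m n

lemma den_eq (r : ℝ) {q : ℚ} (h : (q : ℝ) = r) : den r = q.den := by
  rw [← h, den_ratCast]

lemma den_dvd_real_iff {r : ℝ} {n : ℕ} (hn : n ≠ 0) :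
    den r ∣ n ↔ ∃ m : ℤ, ((m : ℝ) / n = r) := by
  constructor
  · intro hd
    by_cases h : ∃ q : ℚ, (q : ℝ) = r
    · obtain ⟨q, hq⟩ := h
      rw [den_eq r hq, rat_den_dvd_iff hn] at hd
      obtain ⟨m, hm⟩ := hd
      exact ⟨m, by rw [← hq]; exact_mod_cast congrArg (Rat.cast : ℚ → ℝ) hm⟩
    · rw [den, dif_neg h] at hd
      exact absurd (Nat.eq_zero_of_zero_dvd hd) hn
  · rintro ⟨m, rfl⟩
    have : (((m : ℚ) / n : ℚ) : ℝ) = (m : ℝ) / n := by push_cast; ring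
    rw [den_eq _ this]
    exact rat_den_dvd m n

lemma isClosed_div_int (n : ℕ) (hn : n ≠ 0) :
    IsClosed {x : ℝ | ∃ m : ℤ, (m : ℝ) / n = x} := by
  have : {x : ℝ | ∃ m : ℤ, (m : ℝ) / n = x}
      = (fun x : ℝ => x * n) ⁻¹' (Set.range ((↑) : ℤ → ℝ)) := by
    ext x
    simp only [Set.mem_setOf_eq, Set.mem_preimage, Set.mem_range]
    constructor
    · rintro ⟨m, rfl⟩
      exact ⟨m, by field_simp⟩
    · rintro ⟨m, hm⟩
      exact ⟨m, by rw [hm]; field_simp⟩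
  rw [this]
  exact Int.isClosedEmbedding_coe_real.isClosed_range.preimage (by continuity)

lemma setLcm_eq {S : Set ℕ} {n : ℕ} (h1 : ∀ s ∈ S, s ∣ n)
    (h2 : ∀ m : ℕ, (∀ s ∈ S, s ∣ m) → n ∣ m) : setLcm S = n := by
  have : {k | (∀ s ∈ S, s ∣ k) ∧ ∀ m : ℕ, (∀ s ∈ S, s ∣ m) → k ∣ m} = {n} := by
    ext k
    simp only [Set.mem_setOf_eq, Set.mem_singleton_iff]
    constructor
    · rintro ⟨hk1, hk2⟩
      exact Nat.dvd_antisymm (hk2 n h1) (h2 k hk1)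
    · rintro rfl; exact ⟨h1, h2⟩
  rw [setLcm, this, csInf_singleton]

/-- For an additive subgroup `G` of `ℝ` containing `1`, the closure of
`G` in the Euclidean topology is `{r ∈ ℝ : den r ∣ lcm {den g : g ∈ G}}`. -/
theorem closure_subgroup_eq_den_divides
    (G : AddSubgroup ℝ) (h1 : (1 : ℝ) ∈ G) :
    closure (G : Set ℝ) = {r : ℝ | den r ∣ setLcm (den '' (G : Set ℝ))} := by
  rcases AddSubgroup.dense_or_cyclic G with hd | ⟨a, ha⟩
  · -- dense case: setLcm = 0
    have hL : setLcm (den '' (G : Set ℝ)) = 0 := by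
      by_contra hL
      set L := setLcm (den '' (G : Set ℝ)) with hLdef
      have hne : {k | (∀ s ∈ den '' (G : Set ℝ), s ∣ k) ∧
          ∀ m : ℕ, (∀ s ∈ den '' (G : Set ℝ), s ∣ m) → k ∣ m}.Nonempty := by
        by_contra h
        rw [Set.not_nonempty_iff_eq_empty] at h
        exact hL (by rw [hLdef, setLcm, h, Nat.sInf_empty])
      have hmem := Nat.sInf_mem hne
      have hdvd : ∀ g ∈ (G : Set ℝ), den g ∣ L := fun g hg =>
        hmem.1 _ ⟨g, hg, rfl⟩
      have hsub : (G : Set ℝ) ⊆ {x : ℝ | ∃ m : ℤ, (m : ℝ) / L = x} := by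
        intro g hg
        exact (den_dvd_real_iff hL).mp (hdvd g hg)
      have hcl : closure (G : Set ℝ) ⊆ {x : ℝ | ∃ m : ℤ, (m : ℝ) / L = x} :=
        closure_minimal hsub (isClosed_div_int L hL)
      rw [hd.closure_eq] at hcl
      have : (1 : ℝ) / (2 * L) ∈ {x : ℝ | ∃ m : ℤ, (m : ℝ) / L = x} :=
        hcl (Set.mem_univ _)
      obtain ⟨m, hm⟩ := this
      have hL0 : (L : ℝ) ≠ 0 := Nat.cast_ne_zero.mpr hL
      have : (2 * m : ℝ) = 1 := by
        field_simp at hm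
        apply mul_right_cancel₀ hL0
        linear_combination (L : ℝ) * hm
      have : (2 * m : ℤ) = 1 := by exact_mod_cast this
      omega
    rw [hd.closure_eq, hL]
    ext r
    simp [dvd_zero]
  · -- cyclic case
    rw [ha, AddSubgroup.mem_closure_singleton] at h1
    obtain ⟨k, hk⟩ := h1
    rw [zsmul_eq_mul] at hk
    have hk0 : k ≠ 0 := by rintro rfl; simp at hk
    set n : ℕ := k.natAbs with hndef
    have hn0 : n ≠ 0 := Int.natAbs_ne_zero.mpr hk0
    have hnR : ((n : ℝ)) ≠ 0 := Nat.cast_ne_zero.mpr hn0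
    have hkR : ((k : ℝ)) ≠ 0 := Int.cast_ne_zero.mpr hk0
    have hset : (G : Set ℝ) = {x : ℝ | ∃ m : ℤ, (m : ℝ) / n = x} := by
      ext x
      rw [ha]
      rw [SetLike.mem_coe, AddSubgroup.mem_closure_singleton]
      have ha' : a = 1 / k := by field_simp at hk ⊢; linarith [hk]
      have hkn : ((k : ℝ)) = (n : ℝ) ∨ ((k : ℝ)) = -(n : ℝ) := by
        rcases Int.natAbs_eq k with h | h
        · left; rw [h, Int.cast_natCast]
        · right; rw [h, Int.cast_neg, Int.cast_natCast]
      constructor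
      · rintro ⟨m, rfl⟩
        rw [zsmul_eq_mul, ha']
        rcases hkn with h | h
        · exact ⟨m, by rw [h]; ring⟩
        · exact ⟨-m, by rw [h]; push_cast; ring⟩
      · rintro ⟨m, rfl⟩
        rcases hkn with h | h
        · exact ⟨m, by rw [zsmul_eq_mul, ha', h]; ring⟩
        · exact ⟨-m, by rw [zsmul_eq_mul, ha', h]; push_cast; ring⟩
    have hLn : setLcm (den '' (G : Set ℝ)) = n := by
      apply setLcm_eq
      · rintro s ⟨g, hg, rfl⟩
        rw [hset] at hg
        obtain ⟨m, rfl⟩ := hg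
        exact (den_dvd_real_iff hn0).mpr ⟨m, rfl⟩
      · intro m hm
        have h1n : (1 : ℝ) / n ∈ (G : Set ℝ) := by
          rw [hset]; exact ⟨1, by norm_num⟩
        have : den ((1 : ℝ) / n) ∣ m := hm _ ⟨_, h1n, rfl⟩
        have hden : den ((1 : ℝ) / n) = n := by
          have hc : (((n : ℚ)⁻¹ : ℚ) : ℝ) = (1 : ℝ) / n := by push_cast; field_simp
          rw [den_eq _ hc, Rat.inv_natCast_den, if_neg hn0]
        rwa [hden] at this
    rw [hLn]
    have hclosed : closure (G : Set ℝ) = (G : Set ℝ) := by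
      rw [hset]; exact (isClosed_div_int n hn0).closure_eq
    rw [hclosed, hset]
    ext r
    simp only [Set.mem_setOf_eq]
    rw [den_dvd_real_iff hn0]
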